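/- arXiv:0811.3980 — 2 statements merged into one kernel-verified Lean document; each statement's English description precedes it below -/
import Mathlib

section
/- Let θ, γ₁, ..., γ_N ∈ [0, π/2] and probabilities p_k summing to 1 satisfy Σ_k p_k(1 − cos γ_k) ≤ 1 − cos θ. Define γ ∈ [0, π/2] by cos γ = Σ_k p_k cos γ_k, and for each k set a_k = (√p_k/2)[cos(γ_k/2)/cos(γ/2) + sin(γ_k/2)/sin(γ/2)], b_k = (√p_k/2)[cos(γ_k/2)/cos(γ/2) − sin(γ_k/2)/sin(γ/2)], K_k = [[a_k, b_k],[b_k, a_k]] (assuming 0 < γ). Then Σ_k K_k†K_k = I and K_k|ψ_γ⟩ = √p_k |ψ_{γ_k}⟩, where |ψ_α⟩ = (1/√2)(e^{iα/2}, e^{−iα/2})^T. -/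
open Complex Matrix

/-- The standard state `|ψ_α⟩ = (1/√2)(e^{iα/2}, e^{-iα/2})ᵀ`. -/
noncomputable def stdState (α : ℝ) : Fin 2 → ℂ := fun i =>
  if i = 0 then Complex.exp (Complex.I * (α : ℂ) / 2) / (Real.sqrt 2 : ℂ)
  else Complex.exp (-(Complex.I * (α : ℂ)) / 2) / (Real.sqrt 2 : ℂ)

private lemma cosHalfSq (x : ℝ) : Real.cos (x/2)^2 = (1 + Real.cos x)/2 := by
  rw [Real.cos_sq]; ring_nf

private lemma sinHalfSq (x : ℝ) : Real.sin (x/2)^2 = (1 - Real.cos x)/2 := by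
  rw [Real.sin_sq, cosHalfSq]; ring

set_option maxHeartbeats 1000000 in
/-- the explicit measurement of the Jonathan–Plenio analogue: with
`cos γ = Σ_k p_k cos γ_k` (`0 < γ ≤ π/2`) and real Kraus operators
`K_k = [[a_k, b_k], [b_k, a_k]]` built from
`a_k = (√p_k/2)[cos(γ_k/2)/cos(γ/2) + sin(γ_k/2)/sin(γ/2)]`,
`b_k = (√p_k/2)[cos(γ_k/2)/cos(γ/2) - sin(γ_k/2)/sin(γ/2)]`,
one has `Σ_k K_k†K_k = 1` and `K_k|ψ_γ⟩ = √p_k |ψ_{γ_k}⟩`. -/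
theorem jonathan_plenio_construction
    {N : ℕ} (θ : ℝ) (hθ : θ ∈ Set.Icc 0 (Real.pi / 2))
    (γk : Fin N → ℝ) (hγk : ∀ k, γk k ∈ Set.Icc 0 (Real.pi / 2))
    (p : Fin N → ℝ) (hp : ∀ k, 0 ≤ p k) (hp1 : ∑ k, p k = 1)
    (havg : ∑ k, p k * (1 - Real.cos (γk k)) ≤ 1 - Real.cos θ)
    (γ : ℝ) (hγ : γ ∈ Set.Icc 0 (Real.pi / 2)) (hγpos : 0 < γ)
    (hγdef : Real.cos γ = ∑ k, p k * Real.cos (γk k))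
    (a b : Fin N → ℝ)
    (ha : ∀ k, a k = Real.sqrt (p k) / 2 *
      (Real.cos (γk k / 2) / Real.cos (γ / 2) + Real.sin (γk k / 2) / Real.sin (γ / 2)))
    (hb : ∀ k, b k = Real.sqrt (p k) / 2 *
      (Real.cos (γk k / 2) / Real.cos (γ / 2) - Real.sin (γk k / 2) / Real.sin (γ / 2)))
    (K : Fin N → Matrix (Fin 2) (Fin 2) ℝ)
    (hKdef : ∀ k, K k = !![a k, b k; b k, a k]) :
    (∑ k, (K k)ᵀ * K k = 1) ∧
    (∀ k, ((K k).map Complex.ofReal).mulVec (stdState γ)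
        = (Real.sqrt (p k) : ℂ) • stdState (γk k)) := by
  have hπ := Real.pi_pos
  set Cg := Real.cos (γ/2) with hCgdef
  set Sg := Real.sin (γ/2) with hSgdef
  have hCgpos : 0 < Cg := Real.cos_pos_of_mem_Ioo
    ⟨by nlinarith [hγpos], by nlinarith [hγ.2]⟩
  have hSgpos : 0 < Sg := Real.sin_pos_of_pos_of_lt_pi (by linarith) (by nlinarith [hγ.2])
  have hCg : Cg ≠ 0 := ne_of_gt hCgpos
  have hSg : Sg ≠ 0 := ne_of_gt hSgpos
  have hsumC : ∑ k, p k * Real.cos (γk k / 2)^2 = Cg^2 := by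
    have h : ∀ k ∈ Finset.univ, p k * Real.cos (γk k/2)^2
        = p k /2 + p k * Real.cos (γk k)/2 := fun k _ => by rw [cosHalfSq]; ring
    rw [Finset.sum_congr rfl h, Finset.sum_add_distrib, ← Finset.sum_div, ← Finset.sum_div,
      hp1, hCgdef, cosHalfSq, hγdef]
    ring
  have hsumS : ∑ k, p k * Real.sin (γk k / 2)^2 = Sg^2 := by
    have h : ∀ k ∈ Finset.univ, p k * Real.sin (γk k/2)^2
        = p k /2 - p k * Real.cos (γk k)/2 := fun k _ => by rw [sinHalfSq]; ring
    rw [Finset.sum_congr rfl h, Finset.sum_sub_distrib, ← Finset.sum_div, ← Finset.sum_div,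
      hp1, hSgdef, sinHalfSq, hγdef]
    ring
  have key1 : ∀ k, a k * a k + b k * b k
      = p k * Real.cos (γk k/2)^2 / (2*Cg^2) + p k * Real.sin (γk k/2)^2 / (2*Sg^2) := by
    intro k
    set s := Real.sqrt (p k) with hsdef
    have hs : s^2 = p k := Real.sq_sqrt (hp k)
    rw [ha, hb, ← hs]
    field_simp
    rw [Real.sq_sqrt (sq_nonneg s)]
    ring
  have key2 : ∀ k, a k * b k + b k * a k
      = p k * Real.cos (γk k/2)^2 / (2*Cg^2) - p k * Real.sin (γk k/2)^2 / (2*Sg^2) := by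
    intro k
    set s := Real.sqrt (p k) with hsdef
    have hs : s^2 = p k := Real.sq_sqrt (hp k)
    rw [ha, hb, ← hs]
    field_simp
    rw [Real.sq_sqrt (sq_nonneg s)]
    ring
  have hsum1 : ∑ k, (a k * a k + b k * b k) = 1 := by
    have h : ∀ k ∈ Finset.univ, a k * a k + b k * b k
        = p k * Real.cos (γk k/2)^2 / (2*Cg^2) + p k * Real.sin (γk k/2)^2 / (2*Sg^2) :=
      fun k _ => key1 k
    rw [Finset.sum_congr rfl h, Finset.sum_add_distrib, ← Finset.sum_div, ← Finset.sum_div,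
      hsumC, hsumS]
    field_simp
    ring
  have hsum2 : ∑ k, (a k * b k + b k * a k) = 0 := by
    have h : ∀ k ∈ Finset.univ, a k * b k + b k * a k
        = p k * Real.cos (γk k/2)^2 / (2*Cg^2) - p k * Real.sin (γk k/2)^2 / (2*Sg^2) :=
      fun k _ => key2 k
    rw [Finset.sum_congr rfl h, Finset.sum_sub_distrib, ← Finset.sum_div, ← Finset.sum_div,
      hsumC, hsumS]
    field_simp
    ring
  constructor
  · have hprod : ∀ k, (K k)ᵀ * K k
        = !![a k * a k + b k * b k, a k * b k + b k * a k;
             a k * b k + b k * a k, a k * a k + b k * b k] := by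
      intro k
      rw [hKdef]
      have ht : (!![a k, b k; b k, a k])ᵀ = !![a k, b k; b k, a k] := by
        ext i j; fin_cases i <;> fin_cases j <;> rfl
      rw [ht, Matrix.mul_fin_two]
      ext i j; fin_cases i <;> fin_cases j <;> simp <;> ring
    ext i j
    rw [Matrix.sum_apply]
    simp_rw [hprod]
    fin_cases i <;> fin_cases j <;> simp [hsum1, hsum2, Matrix.one_apply]
  · intro k
    have hE1 : Complex.exp (Complex.I * (γ:ℂ) / 2)
        = (Cg:ℂ) + (Sg:ℂ) * Complex.I := by
      rw [show Complex.I * (γ:ℂ) / 2 = ((γ/2:ℝ):ℂ) * Complex.I by push_cast; ring,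
        Complex.exp_mul_I, ← Complex.ofReal_cos, ← Complex.ofReal_sin, hCgdef, hSgdef]
    have hE2 : Complex.exp (-(Complex.I * (γ:ℂ)) / 2)
        = (Cg:ℂ) - (Sg:ℂ) * Complex.I := by
      rw [show -(Complex.I * (γ:ℂ)) / 2 = ((-(γ/2):ℝ):ℂ) * Complex.I by push_cast; ring,
        Complex.exp_mul_I, ← Complex.ofReal_cos, ← Complex.ofReal_sin, Real.cos_neg,
        Real.sin_neg, hCgdef, hSgdef]
      push_cast
      ring
    have hF1 : Complex.exp (Complex.I * ((γk k:ℝ):ℂ) / 2)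
        = (Real.cos (γk k/2) : ℂ) + (Real.sin (γk k/2) : ℂ) * Complex.I := by
      rw [show Complex.I * ((γk k:ℝ):ℂ) / 2 = ((γk k/2:ℝ):ℂ) * Complex.I by push_cast; ring,
        Complex.exp_mul_I, ← Complex.ofReal_cos, ← Complex.ofReal_sin]
    have hF2 : Complex.exp (-(Complex.I * ((γk k:ℝ):ℂ)) / 2)
        = (Real.cos (γk k/2) : ℂ) - (Real.sin (γk k/2) : ℂ) * Complex.I := by
      rw [show -(Complex.I * ((γk k:ℝ):ℂ)) / 2 = ((-(γk k/2):ℝ):ℂ) * Complex.I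
          by push_cast; ring, Complex.exp_mul_I, ← Complex.ofReal_cos, ← Complex.ofReal_sin,
        Real.cos_neg, Real.sin_neg]
      push_cast
      ring
    have hCgC : (Cg:ℂ) ≠ 0 := Complex.ofReal_ne_zero.mpr hCg
    have hSgC : (Sg:ℂ) ≠ 0 := Complex.ofReal_ne_zero.mpr hSg
    have hs2 : (Real.sqrt 2 : ℂ) ≠ 0 := by
      exact Complex.ofReal_ne_zero.mpr (by positivity)
    funext i
    rw [hKdef]
    fin_cases i <;>
    · simp only [Matrix.mulVec, Matrix.map_apply, dotProduct, Fin.sum_univ_two,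
        stdState, Pi.smul_apply, smul_eq_mul, Matrix.cons_val', Matrix.cons_val_zero,
        Matrix.cons_val_one, Matrix.head_cons, Matrix.empty_val', Matrix.cons_val_fin_one,
        Matrix.head_fin_const]
      norm_num [hE1, hE2, hF1, hF2, ha, hb]
      field_simp
      ring
end

section
/- (Analogue of Vidal's theorem) The maximum probability p for which there exist real Kraus operators realizing a TRIO transformation taking |ψ_θ⟩ to |ψ_γ⟩ with probability p (and to the TR-invariant state |0⟩ with probability 1−p) equals min{(1 − cos θ)/(1 − cos γ), 1}, for θ ∈ [0,π/2], γ ∈ (0,π/2]. -/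
open Complex Matrix

/-- The TR-invariant basis state `|0⟩`. -/
def ket0 : Fin 2 → ℂ := fun i => if i = 0 then 1 else 0

lemma sumKey {N : ℕ} (K : Fin N → Matrix (Fin 2) (Fin 2) ℝ)
    (hK : ∑ k, (K k)ᵀ * K k = 1) (w : Fin 2 → ℂ) :
    ∑ k, ∑ i, (((K k).map Complex.ofReal).mulVec w i)^2 = ∑ i, (w i)^2 := by
  have e : ∀ k, ∑ i, (((K k).map Complex.ofReal).mulVec w i)^2
      = ((((K k)ᵀ * K k) 0 0 : ℝ) : ℂ) * (w 0)^2
        + (((((K k)ᵀ * K k) 0 1 : ℝ) : ℂ) + ((((K k)ᵀ * K k) 1 0 : ℝ) : ℂ)) * (w 0 * w 1)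
        + ((((K k)ᵀ * K k) 1 1 : ℝ) : ℂ) * (w 1)^2 := by
    intro k
    simp only [Matrix.mulVec, dotProduct, Matrix.mul_apply, Matrix.map_apply,
      Fin.sum_univ_two, Matrix.transpose_apply]
    push_cast
    ring
  rw [Finset.sum_congr rfl (fun k _ => e k)]
  have h : ∀ i j : Fin 2, ∑ k, ((K k)ᵀ * K k) i j = (1 : Matrix (Fin 2) (Fin 2) ℝ) i j := by
    intro i j; rw [← hK]; simp [Matrix.sum_apply]
  rw [Finset.sum_add_distrib, Finset.sum_add_distrib, ← Finset.sum_mul, ← Finset.sum_mul,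
    ← Finset.sum_mul, Finset.sum_add_distrib, ← Complex.ofReal_sum, ← Complex.ofReal_sum,
    ← Complex.ofReal_sum, ← Complex.ofReal_sum, h, h, h, h]
  simp [Matrix.one_apply, Fin.sum_univ_two, sq]

lemma sumKeyNorm {N : ℕ} (K : Fin N → Matrix (Fin 2) (Fin 2) ℝ)
    (hK : ∑ k, (K k)ᵀ * K k = 1) (w : Fin 2 → ℂ) :
    ∑ k, ∑ i, ‖((K k).map Complex.ofReal).mulVec w i‖^2
      = ∑ i, ‖w i‖^2 := by
  apply Complex.ofReal_injective
  push_cast [Complex.sq_norm, ← Complex.mul_conj]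
  have e : ∀ k, ∑ i, (((K k).map Complex.ofReal).mulVec w i
        * (starRingEnd ℂ) (((K k).map Complex.ofReal).mulVec w i))
      = ((((K k)ᵀ * K k) 0 0 : ℝ) : ℂ) * (w 0 * (starRingEnd ℂ) (w 0))
        + ((((K k)ᵀ * K k) 0 1 : ℝ) : ℂ) * (w 0 * (starRingEnd ℂ) (w 1))
        + ((((K k)ᵀ * K k) 1 0 : ℝ) : ℂ) * (w 1 * (starRingEnd ℂ) (w 0))
        + ((((K k)ᵀ * K k) 1 1 : ℝ) : ℂ) * (w 1 * (starRingEnd ℂ) (w 1)) := by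
    intro k
    simp only [Matrix.mulVec, dotProduct, Matrix.mul_apply, Matrix.map_apply,
      Fin.sum_univ_two, Matrix.transpose_apply, map_add, _root_.map_mul, Complex.conj_ofReal]
    push_cast
    ring
  rw [Finset.sum_congr rfl (fun k _ => e k)]
  have h : ∀ i j : Fin 2, ∑ k, ((K k)ᵀ * K k) i j = (1 : Matrix (Fin 2) (Fin 2) ℝ) i j := by
    intro i j; rw [← hK]; simp [Matrix.sum_apply]
  rw [Finset.sum_add_distrib, Finset.sum_add_distrib, Finset.sum_add_distrib,
    ← Finset.sum_mul, ← Finset.sum_mul, ← Finset.sum_mul, ← Finset.sum_mul,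
    ← Complex.ofReal_sum, ← Complex.ofReal_sum, ← Complex.ofReal_sum, ← Complex.ofReal_sum,
    h, h, h, h]
  simp [Matrix.one_apply, Fin.sum_univ_two]


lemma ket0_eq : ket0 = ![1, 0] := by
  funext i; fin_cases i <;> simp [ket0]

lemma stdState_eq (α : ℝ) : stdState α =
    ![((Real.cos (α/2) : ℂ) + (Real.sin (α/2) : ℂ) * Complex.I) / (Real.sqrt 2 : ℂ),
      ((Real.cos (α/2) : ℂ) - (Real.sin (α/2) : ℂ) * Complex.I) / (Real.sqrt 2 : ℂ)] := by
  have h1 : Complex.I * (α : ℂ) / 2 = ((α/2 : ℝ) : ℂ) * Complex.I := by push_cast; ring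
  have h2 : -(Complex.I * (α : ℂ)) / 2 = (-(α/2 : ℝ) : ℂ) * Complex.I := by push_cast; ring
  funext i; fin_cases i <;>
    simp only [stdState, h1, h2, Complex.exp_mul_I, ← Complex.ofReal_cos, ← Complex.ofReal_sin] <;>
    push_cast [Real.cos_neg, Real.sin_neg] <;> norm_num <;> ring

lemma half_sq (α : ℝ) : Real.cos α = Real.cos (α/2)^2 - Real.sin (α/2)^2 := by
  have h2 := Real.cos_two_mul (α/2)
  rw [show 2 * (α/2) = α by ring] at h2
  linarith [Real.sin_sq_add_cos_sq (α/2)]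

lemma cos_half_sq (α : ℝ) : Real.cos (α/2)^2 = (1 + Real.cos α)/2 := by
  linarith [half_sq α, Real.sin_sq_add_cos_sq (α/2)]

lemma sin_half_sq (α : ℝ) : Real.sin (α/2)^2 = (1 - Real.cos α)/2 := by
  linarith [half_sq α, Real.sin_sq_add_cos_sq (α/2)]

lemma sum_sq_stdState (α : ℝ) : ∑ i, (stdState α i)^2 = ((Real.cos α : ℝ) : ℂ) := by
  rw [stdState_eq]
  have h2 : ((Real.sqrt 2 : ℂ))^2 = 2 := by
    rw [← Complex.ofReal_pow, Real.sq_sqrt (by norm_num : (0:ℝ) ≤ 2)]; norm_num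
  simp only [Fin.sum_univ_two, Matrix.cons_val_zero, Matrix.cons_val_one, Matrix.head_cons,
    div_pow, h2]
  rw [← add_div, half_sq α]
  rw [div_eq_iff (by norm_num : (2:ℂ) ≠ 0)]
  push_cast
  ring_nf
  rw [Complex.I_sq]
  ring

lemma sum_abs_sq_stdState (α : ℝ) : ∑ i, (‖stdState α i‖)^2 = 1 := by
  have hr : ‖((Real.sqrt 2 : ℝ) : ℂ)‖ = Real.sqrt 2 := by
    rw [Complex.norm_real, Real.norm_eq_abs, _root_.abs_of_nonneg (Real.sqrt_nonneg 2)]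
  have he : ∀ t : ℂ, t.re = 0 → ‖Complex.exp t‖ = 1 := by
    intro t ht; rw [Complex.norm_exp, ht, Real.exp_zero]
  have h0 : stdState α 0 = Complex.exp (Complex.I * (α : ℂ) / 2) / (Real.sqrt 2 : ℂ) := by
    simp [stdState]
  have h1 : stdState α 1 = Complex.exp (-(Complex.I * (α : ℂ)) / 2) / (Real.sqrt 2 : ℂ) := by
    simp [stdState]
  rw [Fin.sum_univ_two, h0, h1, norm_div, norm_div, hr, he _ (by simp), he _ (by simp)]
  rw [div_pow]
  norm_num [Real.sq_sqrt]

lemma upper_bound (θ γ : ℝ) (hθ : θ ∈ Set.Icc 0 (Real.pi / 2)) (hγ : γ ∈ Set.Ioc 0 (Real.pi / 2))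
    {N : ℕ} (K : Fin N → Matrix (Fin 2) (Fin 2) ℝ) (s : Finset (Fin N))
    (hK : ∑ k, (K k)ᵀ * K k = 1)
    (hsucc : ∀ k ∈ s, ∃ c : ℂ,
      ((K k).map Complex.ofReal).mulVec (stdState θ) = c • stdState γ)
    (hfail : ∀ k ∉ s, ∃ c : ℂ,
      ((K k).map Complex.ofReal).mulVec (stdState θ) = c • ket0) :
    (∑ k ∈ s, ∑ i, ‖((K k).map Complex.ofReal).mulVec (stdState θ) i‖ ^ 2)
      ≤ min ((1 - Real.cos θ) / (1 - Real.cos γ)) 1 := by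
  set ψ := stdState θ with hψ
  set q : Fin N → ℝ := fun k => ∑ i, ‖((K k).map Complex.ofReal).mulVec ψ i‖ ^ 2 with hq
  set S : Fin N → ℂ := fun k => ∑ i, (((K k).map Complex.ofReal).mulVec ψ i) ^ 2 with hS
  have hqnn : ∀ k, 0 ≤ q k := fun k => Finset.sum_nonneg fun i _ => sq_nonneg _
  have htot : ∑ k, q k = 1 := by
    rw [hq]; rw [sumKeyNorm K hK ψ, hψ, sum_abs_sq_stdState]
  have hcosγ0 : 0 ≤ Real.cos γ := Real.cos_nonneg_of_mem_Icc
    ⟨by linarith [hγ.1, Real.pi_pos], hγ.2⟩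
  have hcosγ1 : Real.cos γ < 1 := by
    have := Real.cos_lt_cos_of_nonneg_of_le_pi (le_refl 0)
      (by linarith [hγ.2, Real.pi_pos] : γ ≤ Real.pi) hγ.1
    simpa using this
  have hcosθ0 : 0 ≤ Real.cos θ := Real.cos_nonneg_of_mem_Icc
    ⟨by linarith [hθ.1, Real.pi_pos], hθ.2⟩
  -- branch values
  have hbr : ∀ k ∈ s, ‖S k‖ = q k * Real.cos γ := by
    intro k hk
    obtain ⟨c, hc⟩ := hsucc k hk
    have h1 : S k = c^2 * (Real.cos γ : ℂ) := by
      rw [hS]; simp only [hc, Pi.smul_apply, smul_eq_mul, mul_pow, ← Finset.mul_sum]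
      rw [sum_sq_stdState]
    have h2 : q k = ‖c‖ ^ 2 := by
      rw [hq]; simp only [hc, Pi.smul_apply, smul_eq_mul, norm_mul, mul_pow,
        ← Finset.mul_sum]
      rw [sum_abs_sq_stdState, mul_one]
    rw [h1, h2, norm_mul, norm_pow, Complex.norm_real, Real.norm_eq_abs, _root_.abs_of_nonneg hcosγ0]
  have hbrf : ∀ k ∉ s, ‖S k‖ = q k := by
    intro k hk
    obtain ⟨c, hc⟩ := hfail k hk
    have h1 : S k = c^2 := by
      rw [hS]; simp [hc, ket0_eq, Fin.sum_univ_two, mul_pow]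
    have h2 : q k = ‖c‖ ^ 2 := by
      rw [hq]; simp [hc, ket0_eq, Fin.sum_univ_two, norm_mul, mul_pow]
    rw [h1, h2, norm_pow]
  have hStot : ∑ k, S k = ((Real.cos θ : ℝ) : ℂ) := by
    rw [hS]; rw [sumKey K hK ψ, hψ, sum_sq_stdState]
  set p : ℝ := ∑ k ∈ s, q k with hp
  have hsplitq : p + ∑ k ∈ sᶜ, q k = 1 := by
    rw [hp, Finset.sum_add_sum_compl]; exact htot
  have hp1 : p ≤ 1 := by
    have : 0 ≤ ∑ k ∈ sᶜ, q k := Finset.sum_nonneg fun k _ => hqnn k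
    linarith
  -- key inequality
  have hkey : Real.cos θ ≤ p * Real.cos γ + (1 - p) := by
    have h1 : Real.cos θ = ‖∑ k, S k‖ := by
      rw [hStot, Complex.norm_real, Real.norm_eq_abs, _root_.abs_of_nonneg hcosθ0]
    have h2 : ‖∑ k, S k‖ ≤ ∑ k, ‖S k‖ :=
      norm_sum_le _ _
    have h3 : ∑ k, ‖S k‖ = ∑ k ∈ s, ‖S k‖ + ∑ k ∈ sᶜ, ‖S k‖ :=
      (Finset.sum_add_sum_compl s _).symm
    have h4 : ∑ k ∈ s, ‖S k‖ = p * Real.cos γ := by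
      rw [hp, Finset.sum_mul]
      exact Finset.sum_congr rfl fun k hk => hbr k hk
    have h5 : ∑ k ∈ sᶜ, ‖S k‖ = 1 - p := by
      have := Finset.sum_congr rfl (fun k hk => hbrf k (Finset.mem_compl.mp hk))
      rw [this]; linarith
    rw [h1]; rw [h3, h4, h5] at h2; linarith [h2]
  refine le_min ?_ hp1
  rw [le_div_iff₀ (by linarith : (0:ℝ) < 1 - Real.cos γ)]
  nlinarith [hkey]

set_option maxHeartbeats 2000000 in
lemma mem_case1 (θ γ : ℝ) (hθ : θ ∈ Set.Icc 0 (Real.pi / 2)) (hγ : γ ∈ Set.Ioc 0 (Real.pi / 2))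
    (hlt : θ ≤ γ) :
    ∃ (N : ℕ) (K : Fin N → Matrix (Fin 2) (Fin 2) ℝ) (s : Finset (Fin N)),
        (∑ k, (K k)ᵀ * K k = 1) ∧
        min ((1 - Real.cos θ) / (1 - Real.cos γ)) 1
          = ∑ k ∈ s, ∑ i, ‖((K k).map Complex.ofReal).mulVec (stdState θ) i‖ ^ 2 ∧
        (∀ k ∈ s, ∃ c : ℂ,
          ((K k).map Complex.ofReal).mulVec (stdState θ) = c • stdState γ) ∧
        (∀ k ∉ s, ∃ c : ℂ,
          ((K k).map Complex.ofReal).mulVec (stdState θ) = c • ket0) := by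
  obtain ⟨hθ0, hθ2⟩ := hθ
  obtain ⟨hγ0, hγ2⟩ := hγ
  have hπ := Real.pi_pos
  have hsin2θ := sin_half_sq θ
  have hsin2γ := sin_half_sq γ
  obtain ⟨a, hadef⟩ : ∃ a, Real.cos (θ/2) = a := ⟨_, rfl⟩
  obtain ⟨b, hbdef⟩ : ∃ b, Real.sin (θ/2) = b := ⟨_, rfl⟩
  obtain ⟨c, hcdef⟩ : ∃ c, Real.cos (γ/2) = c := ⟨_, rfl⟩
  obtain ⟨d, hddef⟩ : ∃ d, Real.sin (γ/2) = d := ⟨_, rfl⟩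
  have ha : 0 < a := hadef ▸ Real.cos_pos_of_mem_Ioo ⟨by linarith, by linarith⟩
  have hb : 0 ≤ b := hbdef ▸ Real.sin_nonneg_of_nonneg_of_le_pi (by linarith) (by linarith)
  have hc : 0 < c := hcdef ▸ Real.cos_pos_of_mem_Ioo ⟨by linarith, by linarith⟩
  have hd : 0 < d := hddef ▸ Real.sin_pos_of_pos_of_lt_pi (by linarith) (by linarith)
  rw [hbdef] at hsin2θ
  rw [hddef] at hsin2γ
  have hbcad : b * c ≤ a * d := by
    have h1 : Real.sin (θ/2 - γ/2) ≤ 0 := by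
      have := Real.sin_nonneg_of_nonneg_of_le_pi (x := γ/2 - θ/2) (by linarith) (by linarith)
      have h2 : θ/2 - γ/2 = -(γ/2 - θ/2) := by ring
      rw [h2, Real.sin_neg]; linarith
    rw [Real.sin_sub, hadef, hbdef, hcdef, hddef] at h1
    linarith
  obtain ⟨x, hxdef⟩ : ∃ x, b * c / (a * d) = x := ⟨_, rfl⟩
  have hx : x * (a * d) = b * c := by
    rw [← hxdef]; field_simp
  have hx0 : 0 ≤ x := by rw [← hxdef]; positivity
  have hx1 : x ≤ 1 := by
    rw [← hxdef, div_le_one (by positivity)]; exact hbcad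
  obtain ⟨u, hudef⟩ : ∃ u, Real.sqrt ((1 - x^2)/2) = u := ⟨_, rfl⟩
  have hu2 : u^2 = (1 - x^2)/2 := by
    rw [← hudef]
    refine Real.sq_sqrt ?_
    have hprod : 0 ≤ (1-x)*(1+x) := mul_nonneg (by linarith) (by linarith)
    have hexp : (1-x)*(1+x) = 1 - x^2 := by ring
    linarith
  have haC : (a:ℂ) ≠ 0 := Complex.ofReal_ne_zero.mpr ha.ne'
  have hdC : (d:ℂ) ≠ 0 := Complex.ofReal_ne_zero.mpr hd.ne'
  have hs2 : (0:ℝ) < Real.sqrt 2 := Real.sqrt_pos.mpr (by norm_num)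
  have hsC : ((Real.sqrt 2:ℝ):ℂ) ≠ 0 := Complex.ofReal_ne_zero.mpr hs2.ne'
  have hs2C : ((Real.sqrt 2:ℝ):ℂ) * ((Real.sqrt 2:ℝ):ℂ) = 2 := by
    rw [← Complex.ofReal_mul, Real.mul_self_sqrt (by norm_num : (0:ℝ) ≤ 2)]; norm_num
  have hxC : (x:ℂ) * ((a:ℂ) * (d:ℂ)) = (b:ℂ) * (c:ℂ) := by exact_mod_cast congrArg Complex.ofReal hx
  have hbr0 : ((!![(x+1)/2, (x-1)/2; (x-1)/2, (x+1)/2] : Matrix (Fin 2) (Fin 2) ℝ).map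
      Complex.ofReal).mulVec (stdState θ) = ((b/d : ℝ) : ℂ) • stdState γ := by
    funext i
    fin_cases i <;>
      · simp only [stdState_eq, Matrix.mulVec, dotProduct, Fin.sum_univ_two,
          Matrix.map_apply, Matrix.cons_val_zero, Matrix.cons_val_one, Matrix.head_cons,
          Matrix.cons_val', Matrix.empty_val', Matrix.cons_val_fin_one, Matrix.head_fin_const,
          Matrix.of_apply, Pi.smul_apply, smul_eq_mul, Fin.isValue, hadef, hbdef, hcdef, hddef]
        push_cast
        field_simp
        linear_combination (2:ℂ) * hxC
  refine ⟨2, ![!![(x+1)/2, (x-1)/2; (x-1)/2, (x+1)/2], !![u, u; 0, 0]], {0}, ?_, ?_, ?_, ?_⟩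
  · rw [Fin.sum_univ_two]
    ext i j
    fin_cases i <;> fin_cases j <;>
      simp [Matrix.mul_apply, Fin.sum_univ_two, Matrix.one_apply, Matrix.vecHead,
        Matrix.vecTail] <;>
      linear_combination hu2
  · rw [Finset.sum_singleton]
    have hcc : Real.cos γ ≤ Real.cos θ :=
      Real.cos_le_cos_of_nonneg_of_le_pi hθ0 (by linarith) hlt
    have h1 : 1 - Real.cos θ = 2*b^2 := by linarith
    have h2 : 1 - Real.cos γ = 2*d^2 := by linarith
    have hmin : min ((1 - Real.cos θ) / (1 - Real.cos γ)) 1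
        = (1 - Real.cos θ) / (1 - Real.cos γ) := by
      apply min_eq_left
      have hpos : (0:ℝ) < 1 - Real.cos γ := by rw [h2]; positivity
      rw [div_le_one hpos]
      linarith
    have hRHS : ∑ i, ‖(((!![(x+1)/2, (x-1)/2; (x-1)/2, (x+1)/2] :
          Matrix (Fin 2) (Fin 2) ℝ)).map Complex.ofReal).mulVec (stdState θ) i‖ ^ 2
        = (b/d)^2 := by
      rw [hbr0]
      simp only [Pi.smul_apply, smul_eq_mul, norm_mul, mul_pow, ← Finset.mul_sum]
      rw [sum_abs_sq_stdState, mul_one, Complex.norm_real, Real.norm_eq_abs,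
        _root_.abs_of_nonneg (by positivity : (0:ℝ) ≤ b/d)]
    rw [show ((![!![(x+1)/2, (x-1)/2; (x-1)/2, (x+1)/2], !![u, u; 0, 0]] :
        Fin 2 → Matrix (Fin 2) (Fin 2) ℝ) 0) = !![(x+1)/2, (x-1)/2; (x-1)/2, (x+1)/2] from rfl]
    rw [hRHS, hmin, h1, h2]
    rw [div_pow, div_eq_div_iff (by positivity) (by positivity)]
    ring
  · intro k hk
    have hk0 : k = 0 := Finset.mem_singleton.mp hk
    subst hk0
    exact ⟨((b/d : ℝ) : ℂ), hbr0⟩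
  · intro k hk
    have hk1 : k = 1 := by revert hk; fin_cases k <;> simp
    subst hk1
    refine ⟨((u * a * Real.sqrt 2 : ℝ) : ℂ), ?_⟩
    funext i
    fin_cases i <;>
      simp only [stdState_eq, ket0_eq, Matrix.mulVec, dotProduct, Fin.sum_univ_two,
        Matrix.map_apply, Matrix.cons_val_zero, Matrix.cons_val_one, Matrix.head_cons,
        Matrix.cons_val', Matrix.empty_val', Matrix.cons_val_fin_one, Matrix.head_fin_const,
        Matrix.of_apply, Matrix.vecHead, Matrix.vecTail, Function.comp_apply,
        Pi.smul_apply, smul_eq_mul, Fin.isValue, hadef, hbdef, hcdef, hddef]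
    · push_cast
      field_simp
      linear_combination (-((u:ℂ) * a)) * hs2C
    · norm_num [Matrix.vecHead, Matrix.vecTail]

set_option maxHeartbeats 2000000 in
lemma mem_case2 (θ γ : ℝ) (hθ : θ ∈ Set.Icc 0 (Real.pi / 2)) (hγ : γ ∈ Set.Ioc 0 (Real.pi / 2))
    (hlt : γ < θ) :
    ∃ (N : ℕ) (K : Fin N → Matrix (Fin 2) (Fin 2) ℝ) (s : Finset (Fin N)),
        (∑ k, (K k)ᵀ * K k = 1) ∧
        min ((1 - Real.cos θ) / (1 - Real.cos γ)) 1
          = ∑ k ∈ s, ∑ i, ‖((K k).map Complex.ofReal).mulVec (stdState θ) i‖ ^ 2 ∧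
        (∀ k ∈ s, ∃ c : ℂ,
          ((K k).map Complex.ofReal).mulVec (stdState θ) = c • stdState γ) ∧
        (∀ k ∉ s, ∃ c : ℂ,
          ((K k).map Complex.ofReal).mulVec (stdState θ) = c • ket0) := by
  obtain ⟨hθ0, hθ2⟩ := hθ
  obtain ⟨hγ0, hγ2⟩ := hγ
  have hπ := Real.pi_pos
  have hsin2θ := sin_half_sq θ
  have hsin2γ := sin_half_sq γ
  have hcos2θ := cos_half_sq θ
  have hcos2γ := cos_half_sq γ
  obtain ⟨e, hedef⟩ : ∃ e, Real.cos θ = e := ⟨_, rfl⟩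
  obtain ⟨f, hfdef⟩ : ∃ f, Real.cos γ = f := ⟨_, rfl⟩
  have hef : e < f := by
    rw [← hedef, ← hfdef]
    exact Real.cos_lt_cos_of_nonneg_of_le_pi (by linarith) (by linarith) hlt
  have he0 : 0 ≤ e := by
    rw [← hedef]; exact Real.cos_nonneg_of_mem_Icc ⟨by linarith, by linarith⟩
  have hf0 : 0 < f := lt_of_le_of_lt he0 hef
  have hf1 : f < 1 := by
    rw [← hfdef]
    have := Real.cos_lt_cos_of_nonneg_of_le_pi (le_refl 0) (by linarith) hγ0
    simpa using this
  obtain ⟨a, hadef⟩ : ∃ a, Real.cos (θ/2) = a := ⟨_, rfl⟩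
  obtain ⟨b, hbdef⟩ : ∃ b, Real.sin (θ/2) = b := ⟨_, rfl⟩
  obtain ⟨c, hcdef⟩ : ∃ c, Real.cos (γ/2) = c := ⟨_, rfl⟩
  obtain ⟨d, hddef⟩ : ∃ d, Real.sin (γ/2) = d := ⟨_, rfl⟩
  have ha : 0 < a := hadef ▸ Real.cos_pos_of_mem_Ioo ⟨by linarith, by linarith⟩
  have hb : 0 < b := hbdef ▸ Real.sin_pos_of_pos_of_lt_pi (by linarith) (by linarith)
  have hc : 0 < c := hcdef ▸ Real.cos_pos_of_mem_Ioo ⟨by linarith, by linarith⟩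
  have hd : 0 < d := hddef ▸ Real.sin_pos_of_pos_of_lt_pi (by linarith) (by linarith)
  rw [hbdef, hedef] at hsin2θ
  rw [hddef, hfdef] at hsin2γ
  rw [hadef, hedef] at hcos2θ
  rw [hcdef, hfdef] at hcos2γ
  obtain ⟨c₁, hc₁def⟩ : ∃ c₁, Real.sqrt ((f+e)/(2*f)) = c₁ := ⟨_, rfl⟩
  obtain ⟨c₂, hc₂def⟩ : ∃ c₂, Real.sqrt ((f-e)/(2*f)) = c₂ := ⟨_, rfl⟩
  have hc₁0 : 0 ≤ c₁ := hc₁def ▸ Real.sqrt_nonneg _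
  have hc₂0 : 0 ≤ c₂ := hc₂def ▸ Real.sqrt_nonneg _
  have hc₁ : c₁^2 = (f+e)/(2*f) := by
    rw [← hc₁def]; exact Real.sq_sqrt (by positivity)
  have hc₂ : c₂^2 = (f-e)/(2*f) := by
    rw [← hc₂def]; exact Real.sq_sqrt (div_nonneg (by linarith) (by positivity))
  have g1 : c₁^2*c^2 + c₂^2*d^2 = a^2 := by
    rw [hc₁, hc₂, hcos2γ, hsin2γ, hcos2θ]; field_simp; ring
  have g2 : c₁^2*d^2 + c₂^2*c^2 = b^2 := by
    rw [hc₁, hc₂, hcos2γ, hsin2γ, hsin2θ]; field_simp; ring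
  have hsum : c₁^2 + c₂^2 = 1 := by
    rw [hc₁, hc₂]; field_simp; ring
  have haC : (a:ℂ) ≠ 0 := Complex.ofReal_ne_zero.mpr ha.ne'
  have hbC : (b:ℂ) ≠ 0 := Complex.ofReal_ne_zero.mpr hb.ne'
  have hs2 : (0:ℝ) < Real.sqrt 2 := Real.sqrt_pos.mpr (by norm_num)
  have hsC : ((Real.sqrt 2:ℝ):ℂ) ≠ 0 := Complex.ofReal_ne_zero.mpr hs2.ne'
  set A := c₁*c/a with hA
  set E := c₁*d/b with hE
  set B := c₂*c/b with hB
  set D := -(c₂*d)/a with hD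
  have hAD : A^2 + D^2 = 1 := by
    rw [hA, hD]; field_simp; linear_combination g1
  have hEB : E^2 + B^2 = 1 := by
    rw [hE, hB]; field_simp; linear_combination g2
  have hbr0 : ((!![(A+E)/2, (A-E)/2; (A-E)/2, (A+E)/2] : Matrix (Fin 2) (Fin 2) ℝ).map
      Complex.ofReal).mulVec (stdState θ) = ((c₁ : ℝ) : ℂ) • stdState γ := by
    funext i
    fin_cases i <;>
      · simp only [stdState_eq, Matrix.mulVec, dotProduct, Fin.sum_univ_two,
          Matrix.map_apply, Matrix.cons_val_zero, Matrix.cons_val_one, Matrix.head_cons,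
          Matrix.cons_val', Matrix.empty_val', Matrix.cons_val_fin_one, Matrix.head_fin_const,
          Matrix.of_apply, Matrix.vecHead, Matrix.vecTail, Function.comp_apply,
          Pi.smul_apply, smul_eq_mul, Fin.isValue, hadef, hbdef, hcdef, hddef, hA, hE]
        push_cast
        field_simp
        ring
  have hbr1 : ((!![(B+D)/2, (-B+D)/2; (B-D)/2, (-B-D)/2] : Matrix (Fin 2) (Fin 2) ℝ).map
      Complex.ofReal).mulVec (stdState θ) = (Complex.I * ((c₂ : ℝ) : ℂ)) • stdState γ := by
    funext i
    fin_cases i <;>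
      · simp only [stdState_eq, Matrix.mulVec, dotProduct, Fin.sum_univ_two,
          Matrix.map_apply, Matrix.cons_val_zero, Matrix.cons_val_one, Matrix.head_cons,
          Matrix.cons_val', Matrix.empty_val', Matrix.cons_val_fin_one, Matrix.head_fin_const,
          Matrix.of_apply, Matrix.vecHead, Matrix.vecTail, Function.comp_apply,
          Pi.smul_apply, smul_eq_mul, Fin.isValue, hadef, hbdef, hcdef, hddef, hB, hD]
        push_cast
        field_simp
        ring_nf
        rw [Complex.I_sq]
        ring
  refine ⟨2, ![!![(A+E)/2, (A-E)/2; (A-E)/2, (A+E)/2],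
      !![(B+D)/2, (-B+D)/2; (B-D)/2, (-B-D)/2]], Finset.univ, ?_, ?_, ?_, ?_⟩
  · rw [Fin.sum_univ_two]
    ext i j
    fin_cases i <;> fin_cases j <;>
      · simp only [Matrix.mul_apply, Fin.sum_univ_two, Matrix.one_apply, Matrix.vecHead,
          Matrix.vecTail, Matrix.transpose_apply, Matrix.add_apply, Matrix.cons_val_zero,
          Matrix.cons_val_one, Matrix.head_cons, Matrix.cons_val', Matrix.empty_val',
          Matrix.cons_val_fin_one, Matrix.head_fin_const, Matrix.of_apply, Function.comp_apply,
          Fin.isValue]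
        first
          | linear_combination (1/2 : ℝ) * hAD + (1/2 : ℝ) * hEB
          | linear_combination (1/2 : ℝ) * hAD - (1/2 : ℝ) * hEB
          | (norm_num; linear_combination (1/2 : ℝ) * hAD + (1/2 : ℝ) * hEB)
          | (norm_num; linear_combination (1/2 : ℝ) * hAD - (1/2 : ℝ) * hEB)
  · have hmin : min ((1 - Real.cos θ) / (1 - Real.cos γ)) 1 = 1 := by
      apply min_eq_right
      rw [hedef, hfdef, le_div_iff₀ (by linarith : (0:ℝ) < 1 - f)]
      linarith
    rw [hmin, Fin.sum_univ_two]
    simp only [Matrix.cons_val_zero, Matrix.cons_val_one, Matrix.head_cons]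
    rw [hbr0, hbr1]
    simp only [Pi.smul_apply, smul_eq_mul, norm_mul, mul_pow, ← Finset.mul_sum]
    rw [sum_abs_sq_stdState]
    simp only [Complex.norm_real, Real.norm_eq_abs, Complex.norm_I, _root_.abs_of_nonneg hc₁0,
      _root_.abs_of_nonneg hc₂0, mul_one, one_mul]
    linarith [hsum]
  · intro k _
    fin_cases k
    · exact ⟨((c₁ : ℝ) : ℂ), hbr0⟩
    · exact ⟨(Complex.I * ((c₂ : ℝ) : ℂ)), hbr1⟩
  · intro k hk
    simp at hk


/-- analogue of Vidal's theorem: the maximum probability `p` over all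
TRIO measurements (real Kraus operators, `Σ_k K_k†K_k = 1`) whose branches in a
designated success set `s` are proportional to `|ψ_γ⟩` (these branches have total
probability `p`) and whose remaining branches are proportional to the TR-invariant
state `|0⟩`, equals `min{(1 - cos θ)/(1 - cos γ), 1}`. -/
theorem vidal_analogue
    (θ γ : ℝ) (hθ : θ ∈ Set.Icc 0 (Real.pi / 2)) (hγ : γ ∈ Set.Ioc 0 (Real.pi / 2)) :
    IsGreatest
      {p : ℝ | ∃ (N : ℕ) (K : Fin N → Matrix (Fin 2) (Fin 2) ℝ) (s : Finset (Fin N)),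
        (∑ k, (K k)ᵀ * K k = 1) ∧
        p = ∑ k ∈ s, ∑ i, ‖((K k).map Complex.ofReal).mulVec (stdState θ) i‖ ^ 2 ∧
        (∀ k ∈ s, ∃ c : ℂ,
          ((K k).map Complex.ofReal).mulVec (stdState θ) = c • stdState γ) ∧
        (∀ k ∉ s, ∃ c : ℂ,
          ((K k).map Complex.ofReal).mulVec (stdState θ) = c • ket0)}
      (min ((1 - Real.cos θ) / (1 - Real.cos γ)) 1) := by
  constructor
  · rcases le_or_gt θ γ with h | h
    · obtain ⟨N, K, s, h1, h2, h3, h4⟩ := mem_case1 θ γ hθ hγ h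
      exact ⟨N, K, s, h1, h2, h3, h4⟩
    · obtain ⟨N, K, s, h1, h2, h3, h4⟩ := mem_case2 θ γ hθ hγ h
      exact ⟨N, K, s, h1, h2, h3, h4⟩
  · rintro p ⟨N, K, s, hK, hp, hsucc, hfail⟩
    rw [hp]
    exact upper_bound θ γ hθ hγ K s hK hsucc hfail
end
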